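/- Let k ≥ 1 and let n₁, …, n_k be positive integers. Then the codensity of the lattice of transfer systems on the product of chains [n₁] × ⋯ × [n_k] satisfies ρ(Tr([n₁] × ⋯ × [n_k])) = N/D², where N = Σ over all tuples with 0 ≤ x_i ≤ y_i ≤ z_i ≤ n_i for each 1 ≤ i ≤ k of (∏_{i=1}^k (z_i − x_i + 1) − ∏_{i=1}^k (z_i − y_i + 1)), and D = Σ over all tuples with 0 ≤ x_i ≤ n_i for each 1 ≤ i ≤ k of (∏_{i=1}^k (n_i − x_i + 1) − 1). -/

import Mathlib

/-- A transfer system on a finite lattice `L` (with trivial group action): a partial order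
refining `≤` which is closed under restriction. -/
structure TransferSystem (L : Type*) [Lattice L] : Type _ where
  rel : L → L → Prop
  refl : ∀ x, rel x x
  trans : ∀ {x y z}, rel x y → rel y z → rel x z
  le_of_rel : ∀ {x y}, rel x y → x ≤ y
  restrict : ∀ {x y x'}, rel x y → x' ≤ y → rel (x ⊓ x') x'

namespace TransferSystem

variable {L : Type*} [Lattice L]

theorem ext' {S T : TransferSystem L} (h : S.rel = T.rel) : S = T := by
  cases S; cases T; simpa using h

instance : PartialOrder (TransferSystem L) where
  le S T := ∀ ⦃x y : L⦄, S.rel x y → T.rel x y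
  le_refl S := fun _ _ h => h
  le_trans S T U h1 h2 := fun _ _ h => h2 (h1 h)
  le_antisymm S T h1 h2 :=
    ext' (by funext x y; exact propext ⟨fun h => h1 h, fun h => h2 h⟩)

/-- The intersection of a set of transfer systems. -/
def sInfTS (s : Set (TransferSystem L)) : TransferSystem L where
  rel x y := x ≤ y ∧ ∀ T ∈ s, T.rel x y
  refl x := ⟨le_refl x, fun T _ => T.refl x⟩
  trans h1 h2 := ⟨h1.1.trans h2.1, fun T hT => T.trans (h1.2 T hT) (h2.2 T hT)⟩
  le_of_rel h := h.1
  restrict h hle := ⟨inf_le_right, fun T hT => T.restrict (h.2 T hT) hle⟩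

instance : InfSet (TransferSystem L) := ⟨sInfTS⟩

theorem sInf_rel (s : Set (TransferSystem L)) (x y : L) :
    (sInf s).rel x y ↔ x ≤ y ∧ ∀ T ∈ s, T.rel x y := Iff.rfl

/-- The complete lattice of transfer systems, ordered by refinement. -/
instance : CompleteLattice (TransferSystem L) :=
  completeLatticeOfInf _ (fun s =>
    ⟨fun T hT _ _ h => h.2 T hT,
     fun T hT _ _ h => ((sInf_rel s _ _).2 ⟨T.le_of_rel h, fun S hS => hT hS h⟩)⟩)

end TransferSystem

/-- The codensity `ρ` of (the reduced formal context of) a finite lattice `α`: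
the number of pairs `(A, B)` with `A` join-irreducible, `B` meet-irreducible and `A ≰ B`,
divided by the product of the numbers of join-irreducibles and meet-irreducibles. -/
noncomputable def codensity (α : Type*) [Lattice α] : ℚ :=
  (Nat.card {p : α × α // SupIrred p.1 ∧ InfIrred p.2 ∧ ¬ p.1 ≤ p.2} : ℚ) /
    ((Nat.card {a : α // SupIrred a} : ℚ) * (Nat.card {a : α // InfIrred a} : ℚ))


namespace TransferSystem

section LatticeTheory

variable {L : Type*} [Lattice L]

lemma le_def' {S T : TransferSystem L} : S ≤ T ↔ ∀ x y, S.rel x y → T.rel x y :=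
  ⟨fun h x y hxy => h hxy, fun h _ _ hxy => h _ _ hxy⟩

instance [Finite L] : Finite (TransferSystem L) :=
  Finite.of_injective (fun T => T.rel) fun _ _ h => ext' h

/-- The discrete (least) transfer system. -/
def trivTS : TransferSystem L where
  rel x y := x = y
  refl _ := rfl
  trans h1 h2 := h1.trans h2
  le_of_rel h := h.le
  restrict {x y x'} h hle := inf_eq_right.2 (hle.trans_eq h.symm)

lemma trivTS_le (T : TransferSystem L) : trivTS ≤ T := fun x _ h => h ▸ T.refl x

/-- The complete (greatest) transfer system. -/
def topTS : TransferSystem L where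
  rel x y := x ≤ y
  refl x := le_refl x
  trans h1 h2 := h1.trans h2
  le_of_rel h := h
  restrict _ _ := inf_le_right

lemma le_topTS (T : TransferSystem L) : T ≤ topTS := fun _ _ h => T.le_of_rel h

/-- The transfer system generated by a single arrow `p → q`. -/
def genTS (p q : L) : TransferSystem L where
  rel a b := a = b ∨ (b ≤ q ∧ a = p ⊓ b)
  refl _ := Or.inl rfl
  trans := by
    rintro a b c (rfl | ⟨hb, rfl⟩) (rfl | ⟨hc, rfl⟩)
    · exact Or.inl rfl
    · exact Or.inr ⟨hc, rfl⟩
    · exact Or.inr ⟨hb, rfl⟩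
    · exact Or.inr ⟨hc, by rw [← inf_assoc, inf_idem]⟩
  le_of_rel := by rintro a b (rfl | ⟨hb, rfl⟩); exacts [le_rfl, inf_le_right]
  restrict := by
    rintro a b x' (rfl | ⟨hb, rfl⟩) hle
    · exact Or.inl (inf_eq_right.2 hle)
    · exact Or.inr ⟨hle.trans hb, by rw [inf_assoc, inf_eq_right.2 hle]⟩

lemma genTS_rel {p q a b : L} : (genTS p q).rel a b ↔ a = b ∨ (b ≤ q ∧ a = p ⊓ b) := Iff.rfl

lemma genTS_rel_self {p q : L} (h : p ≤ q) : (genTS p q).rel p q :=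
  Or.inr ⟨le_rfl, (inf_eq_left.2 h).symm⟩

lemma genTS_le {p q : L} (h : p ≤ q) {T : TransferSystem L} : genTS p q ≤ T ↔ T.rel p q := by
  constructor
  · intro hle; exact hle (genTS_rel_self h)
  · intro hpq
    rw [le_def']
    rintro a b (rfl | ⟨hb, rfl⟩)
    · exact T.refl a
    · exact T.restrict hpq hb

/-- `genTS p q` with the top arrow removed: used to prove sup-irreducibility. -/
def punctTS (p q : L) : TransferSystem L where
  rel a b := a = b ∨ (b ≤ q ∧ a = p ⊓ b ∧ b ≠ q)
  refl _ := Or.inl rfl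
  trans := by
    rintro a b c (rfl | ⟨hb, rfl, hbq⟩) (rfl | ⟨hc, rfl, hcq⟩)
    · exact Or.inl rfl
    · exact Or.inr ⟨hc, rfl, hcq⟩
    · exact Or.inr ⟨hb, rfl, hbq⟩
    · exact Or.inr ⟨hc, by rw [← inf_assoc, inf_idem], hcq⟩
  le_of_rel := by rintro a b (rfl | ⟨hb, rfl, _⟩); exacts [le_rfl, inf_le_right]
  restrict := by
    rintro a b x' (rfl | ⟨hb, rfl, hbq⟩) hle
    · exact Or.inl (inf_eq_right.2 hle)
    · refine Or.inr ⟨hle.trans hb, by rw [inf_assoc, inf_eq_right.2 hle], fun hx => ?_⟩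
      exact hbq (le_antisymm hb (hx ▸ hle))

lemma supIrred_genTS {p q : L} (h : p < q) : SupIrred (genTS p q) := by
  constructor
  · intro hmin
    have h2 : genTS p q ≤ trivTS := hmin (trivTS_le _)
    exact h.ne (h2 (genTS_rel_self h.le))
  · intro b c hbc
    by_contra hcon
    push_neg at hcon
    obtain ⟨hb, hc⟩ := hcon
    have hble : b ≤ genTS p q := hbc ▸ le_sup_left
    have hcle : c ≤ genTS p q := hbc ▸ le_sup_right
    have key : ∀ S : TransferSystem L, S ≤ genTS p q → ¬ S.rel p q → S ≤ punctTS p q := by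
      intro S hSle hSrel
      rw [le_def']
      intro a b' hab
      rcases hSle hab with rfl | ⟨hb', rfl⟩
      · exact Or.inl rfl
      · rcases eq_or_ne b' q with rfl | hne
        · exact absurd (by rwa [inf_eq_left.2 h.le] at hab) hSrel
        · exact Or.inr ⟨hb', rfl, hne⟩
    have hbp : b ≤ punctTS p q :=
      key b hble fun hr => hb (le_antisymm hble ((genTS_le h.le).2 hr))
    have hcp : c ≤ punctTS p q :=
      key c hcle fun hr => hc (le_antisymm hcle ((genTS_le h.le).2 hr))
    have : genTS p q ≤ punctTS p q := hbc ▸ sup_le hbp hcp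
    rcases this (genTS_rel_self h.le) with h1 | ⟨_, _, h3⟩
    · exact h.ne h1
    · exact h3 rfl

/-- The "co-generated" transfer system associated to a pair `x, y`. -/
def coTS (x y : L) : TransferSystem L where
  rel w z := w ≤ z ∧ (x ≤ w → y ≤ z → y ≤ w)
  refl _ := ⟨le_rfl, fun _ h => h⟩
  trans := by
    rintro a b c ⟨hab, h1⟩ ⟨hbc, h2⟩
    exact ⟨hab.trans hbc, fun hxa hyc => h1 hxa (h2 (hxa.trans hab) hyc)⟩
  le_of_rel h := h.1
  restrict := by
    rintro a b x' ⟨hab, h1⟩ hle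
    refine ⟨inf_le_right, fun hx hy => ?_⟩
    exact le_inf (h1 (hx.trans inf_le_left) (hy.trans hle)) hy

lemma coTS_rel {x y w z : L} : (coTS x y).rel w z ↔ w ≤ z ∧ (x ≤ w → y ≤ z → y ≤ w) := Iff.rfl

lemma not_coTS_rel_self {x y : L} (h : x < y) : ¬ (coTS x y).rel x y :=
  fun r => absurd (r.2 le_rfl le_rfl) h.not_ge

lemma inf_rel (S U : TransferSystem L) (w z : L) :
    (S ⊓ U).rel w z ↔ S.rel w z ∧ U.rel w z := by
  rw [← sInf_pair, sInf_rel]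
  constructor
  · rintro ⟨_, hT⟩
    exact ⟨hT S (by simp), hT U (by simp)⟩
  · rintro ⟨h1, h2⟩
    refine ⟨S.le_of_rel h1, ?_⟩
    rintro T (rfl | rfl)
    exacts [h1, h2]

lemma infIrred_coTS {x y : L} (h : x < y) : InfIrred (coTS x y) := by
  constructor
  · intro hmax
    have h2 : topTS ≤ coTS x y := hmax (le_topTS _)
    exact absurd ((h2 (h.le : topTS.rel x y)).2 le_rfl le_rfl) h.not_ge
  · intro S U hSU
    by_contra hcon
    push_neg at hcon
    obtain ⟨hS, hU⟩ := hcon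
    have hSge : coTS x y ≤ S := hSU ▸ inf_le_left
    have hUge : coTS x y ≤ U := hSU ▸ inf_le_right
    have key : ∀ V : TransferSystem L, coTS x y ≤ V → V ≠ coTS x y → V.rel x y := by
      intro V hVge hVne
      have hnle : ¬ V ≤ coTS x y := fun hh => hVne (le_antisymm hh hVge)
      rw [le_def'] at hnle
      push_neg at hnle
      obtain ⟨w, z, hwz, hnc⟩ := hnle
      have hwlez : w ≤ z := V.le_of_rel hwz
      have h3 : x ≤ w ∧ y ≤ z ∧ ¬ y ≤ w := by
        by_contra hcc
        exact hnc ⟨hwlez, fun hx hy => by tauto⟩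
      obtain ⟨hxw, hyz, hyw⟩ := h3
      have h4 : V.rel (w ⊓ y) y := V.restrict hwz hyz
      have h5 : V.rel x (w ⊓ y) := hVge
        ⟨le_inf hxw h.le, fun _ hy' => absurd (hy'.trans inf_le_left) hyw⟩
      exact V.trans h5 h4
    have : (coTS x y).rel x y := by
      rw [← hSU, inf_rel]
      exact ⟨key S hSge hS, key U hUge hU⟩
    exact not_coTS_rel_self h this

lemma exists_eq_of_sSup {T : TransferSystem L} (hT : SupIrred T) :
    ∀ s : Finset (TransferSystem L), sSup ↑s = T → ∃ S ∈ s, S = T := by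
  classical
  intro s
  induction s using Finset.induction_on with
  | empty =>
    intro hs
    simp only [Finset.coe_empty, sSup_empty] at hs
    exact absurd (hs ▸ isMin_bot) hT.1
  | @insert a s ha ih =>
    intro hs
    rw [Finset.coe_insert, sSup_insert] at hs
    rcases hT.2 hs with h1 | h1
    · exact ⟨a, Finset.mem_insert_self a s, h1⟩
    · obtain ⟨S, hSs, hSe⟩ := ih h1
      exact ⟨S, Finset.mem_insert_of_mem hSs, hSe⟩

lemma exists_eq_of_sInf {T : TransferSystem L} (hT : InfIrred T) :
    ∀ s : Finset (TransferSystem L), sInf ↑s = T → ∃ S ∈ s, S = T := by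
  classical
  intro s
  induction s using Finset.induction_on with
  | empty =>
    intro hs
    simp only [Finset.coe_empty, sInf_empty] at hs
    exact absurd (hs ▸ isMax_top) hT.1
  | @insert a s ha ih =>
    intro hs
    rw [Finset.coe_insert, sInf_insert] at hs
    rcases hT.2 hs with h1 | h1
    · exact ⟨a, Finset.mem_insert_self a s, h1⟩
    · obtain ⟨S, hSs, hSe⟩ := ih h1
      exact ⟨S, Finset.mem_insert_of_mem hSs, hSe⟩

lemma separation [Finite L] (B : TransferSystem L) {u v : L} (huv : u ≤ v) (h : ¬ B.rel u v) :
    ∃ x y, x < y ∧ B ≤ coTS x y ∧ x ≤ u ∧ y ≤ v ∧ ¬ y ≤ u := by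
  classical
  have hne : u ≠ v := fun e => h (e ▸ B.refl u)
  set Y : Set L := {y | y ≤ v ∧ ¬ y ≤ u ∧ ¬ B.rel (u ⊓ y) y} with hYdef
  have hvY : v ∈ Y := ⟨le_rfl, fun hvu => hne (le_antisymm huv hvu), by rwa [inf_eq_left.2 huv]⟩
  obtain ⟨y, hyY, hymin⟩ : ∃ y ∈ Y, ∀ a' ∈ Y, a' ≤ y → y = a' := by
    obtain ⟨y, hy⟩ := Y.toFinite.exists_minimal ⟨v, hvY⟩
    exact ⟨y, hy.1, fun a' ha' hle => le_antisymm (hy.2 ha' hle) hle⟩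
  obtain ⟨hyv, hynu, hynrel⟩ := hyY
  have hxy : u ⊓ y < y :=
    lt_of_le_of_ne inf_le_right fun e => hynu (e ▸ inf_le_left)
  refine ⟨u ⊓ y, y, hxy, ?_, inf_le_left, hyv, hynu⟩
  rw [le_def']
  intro w z hwz
  refine ⟨B.le_of_rel hwz, fun hxw hyz => ?_⟩
  by_contra hyw
  have h1 : B.rel (w ⊓ y) y := B.restrict hwz hyz
  by_cases hwyu : w ⊓ y ≤ u
  · have heq : w ⊓ y = u ⊓ y :=
      le_antisymm (le_inf hwyu inf_le_right) (le_inf hxw inf_le_right)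
    exact hynrel (heq ▸ h1)
  · have heq : u ⊓ (w ⊓ y) = u ⊓ y := by
      refine le_antisymm (le_inf inf_le_left ((inf_le_right).trans inf_le_right)) ?_
      exact le_inf inf_le_left (le_inf hxw inf_le_right)
    have hmem : w ⊓ y ∈ Y := by
      refine ⟨inf_le_right.trans hyv, hwyu, fun hcon => ?_⟩
      exact hynrel (B.trans (heq ▸ hcon) h1)
    have h6 : y = w ⊓ y := hymin _ hmem inf_le_right
    exact hyw (h6.le.trans inf_le_left)

lemma supIrred_iff [Finite L] {T : TransferSystem L} :
    SupIrred T ↔ ∃ p q, p < q ∧ T = genTS p q := by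
  classical
  constructor
  · intro hT
    set s : Set (TransferSystem L) := {S | ∃ p q, p < q ∧ T.rel p q ∧ S = genTS p q} with hsdef
    have hsup : sSup s = T := by
      refine le_antisymm (sSup_le ?_) ?_
      · rintro S ⟨p, q, hpq, hrel, rfl⟩
        exact (genTS_le hpq.le).2 hrel
      · rw [le_def']
        intro a b hab
        rcases eq_or_ne a b with rfl | hne
        · exact (sSup s).refl a
        · have hmem : genTS a b ∈ s :=
            ⟨a, b, lt_of_le_of_ne (T.le_of_rel hab) hne, hab, rfl⟩
          exact le_sSup hmem (genTS_rel_self (T.le_of_rel hab))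
    obtain ⟨S, hSs, hSe⟩ := exists_eq_of_sSup hT s.toFinite.toFinset
      (by rw [Set.Finite.coe_toFinset]; exact hsup)
    rw [Set.Finite.mem_toFinset] at hSs
    obtain ⟨p, q, hpq, _, rfl⟩ := hSs
    exact ⟨p, q, hpq, hSe.symm⟩
  · rintro ⟨p, q, hpq, rfl⟩
    exact supIrred_genTS hpq

lemma infIrred_iff [Finite L] {B : TransferSystem L} :
    InfIrred B ↔ ∃ x y, x < y ∧ B = coTS x y := by
  classical
  constructor
  · intro hB
    set s : Set (TransferSystem L) := {S | ∃ x y, x < y ∧ B ≤ coTS x y ∧ S = coTS x y} with hsdef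
    have hinf : sInf s = B := by
      refine le_antisymm ?_ (le_sInf ?_)
      · rw [le_def']
        intro w z hwz
        by_contra hnB
        obtain ⟨x, y, hxy, hle, hxw, hyz, hyw⟩ :=
          separation B ((sInf_rel s w z).1 hwz).1 hnB
        have hmem : coTS x y ∈ s := ⟨x, y, hxy, hle, rfl⟩
        exact hyw ((((sInf_rel s w z).1 hwz).2 _ hmem).2 hxw hyz)
      · rintro S ⟨x, y, hxy, hle, rfl⟩
        exact hle
    obtain ⟨S, hSs, hSe⟩ := exists_eq_of_sInf hB s.toFinite.toFinset
      (by rw [Set.Finite.coe_toFinset]; exact hinf)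
    rw [Set.Finite.mem_toFinset] at hSs
    obtain ⟨x, y, hxy, _, rfl⟩ := hSs
    exact ⟨x, y, hxy, hSe.symm⟩
  · rintro ⟨x, y, hxy, rfl⟩
    exact infIrred_coTS hxy

lemma genTS_inj {p q p' q' : L} (h : p < q) (h' : p' < q') (e : genTS p q = genTS p' q') :
    p = p' ∧ q = q' := by
  have h1 : (genTS p' q').rel p q := e ▸ genTS_rel_self h.le
  have h2 : (genTS p q).rel p' q' := e ▸ genTS_rel_self h'.le
  rcases h1 with h1 | ⟨hq, hp⟩
  · exact absurd h1 h.ne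
  rcases h2 with h2 | ⟨hq', hp'⟩
  · exact absurd h2 h'.ne
  have hqq : q = q' := le_antisymm hq hq'
  subst hqq
  exact ⟨by rw [hp, inf_eq_left.2 h'.le], rfl⟩

lemma coTS_inj {x y x' y' : L} (h : x < y) (h' : x' < y') (e : coTS x y = coTS x' y') :
    x = x' ∧ y = y' := by
  have k : ¬ (coTS x' y').rel x y := e ▸ not_coTS_rel_self h
  have k' : ¬ (coTS x y).rel x' y' := e ▸ not_coTS_rel_self h'
  have k2 : ¬ (x' ≤ x → y' ≤ y → y' ≤ x) := fun imp => k ⟨h.le, imp⟩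
  have k2' : ¬ (x ≤ x' → y ≤ y' → y ≤ x') := fun imp => k' ⟨h'.le, imp⟩
  push_neg at k2 k2'
  exact ⟨le_antisymm k2'.1 k2.1, le_antisymm k2'.2.1 k2.2.1⟩

lemma not_genTS_le_coTS_iff {p q x y : L} (hpq : p < q) :
    ¬ genTS p q ≤ coTS x y ↔ x ≤ p ∧ y ≤ q ∧ ¬ y ≤ p := by
  rw [genTS_le hpq.le, coTS_rel]
  constructor
  · intro hnc
    have : ¬ (x ≤ p → y ≤ q → y ≤ p) := fun imp => hnc ⟨hpq.le, imp⟩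
    push_neg at this
    exact this
  · rintro ⟨hxp, hyq, hyp⟩ ⟨_, imp⟩
    exact hyp (imp hxp hyq)

end LatticeTheory

end TransferSystem


section Counting

open Finset TransferSystem

open scoped Classical

variable {k : ℕ} {n : Fin k → ℕ}

private lemma sum_indicator_Icc {m : ℕ} {a b : Fin (m + 1)} (h : a ≤ b) :
    ∑ t : Fin (m + 1), (if a ≤ t ∧ t ≤ b then (1 : ℚ) else 0)
      = ((b : ℕ) : ℚ) - ((a : ℕ) : ℚ) + 1 := by
  classical
  rw [Finset.sum_boole]
  have h1 : ({t ∈ (univ : Finset (Fin (m + 1))) | a ≤ t ∧ t ≤ b}) = Finset.Icc a b := by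
    ext t; simp [Finset.mem_Icc]
  rw [h1, Fin.card_Icc]
  have hba : (a : ℕ) ≤ (b : ℕ) := h
  rw [Nat.cast_sub (by omega : (a : ℕ) ≤ (b : ℕ) + 1)]
  push_cast
  ring

private lemma prod_eq_sum_indicator {x z : ∀ i : Fin k, Fin (n i + 1)} (h : x ≤ z) :
    (∏ i, (((z i : ℕ) : ℚ) - ((x i : ℕ) : ℚ) + 1))
      = ∑ w : ∀ i : Fin k, Fin (n i + 1), (if x ≤ w ∧ w ≤ z then (1 : ℚ) else 0) := by
  classical
  have h1 : ∀ w : ∀ i : Fin k, Fin (n i + 1),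
      (if x ≤ w ∧ w ≤ z then (1 : ℚ) else 0)
        = ∏ i, (if x i ≤ w i ∧ w i ≤ z i then (1 : ℚ) else 0) := by
    intro w
    by_cases hc : x ≤ w ∧ w ≤ z
    · rw [if_pos hc]
      exact (Finset.prod_eq_one fun i _ => if_pos ⟨hc.1 i, hc.2 i⟩).symm
    · rw [if_neg hc]
      have hex : ∃ i, ¬ (x i ≤ w i ∧ w i ≤ z i) := by
        by_contra hall
        push_neg at hall
        exact hc ⟨fun i => (hall i).1, fun i => (hall i).2⟩
      obtain ⟨i0, hi0⟩ := hex
      exact (Finset.prod_eq_zero (Finset.mem_univ i0)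
        (if_neg hi0 : (if x i0 ≤ w i0 ∧ w i0 ≤ z i0 then (1 : ℚ) else 0) = 0)).symm
  calc (∏ i, (((z i : ℕ) : ℚ) - ((x i : ℕ) : ℚ) + 1))
      = ∏ i, ∑ t : Fin (n i + 1), (if x i ≤ t ∧ t ≤ z i then (1 : ℚ) else 0) :=
        Finset.prod_congr rfl fun i _ => (sum_indicator_Icc (h i)).symm
    _ = ∑ w ∈ Fintype.piFinset (fun i => (univ : Finset (Fin (n i + 1)))),
          ∏ i, (if x i ≤ w i ∧ w i ≤ z i then (1 : ℚ) else 0) :=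
        Finset.prod_univ_sum _ _
    _ = ∑ w : ∀ i : Fin k, Fin (n i + 1),
          ∏ i, (if x i ≤ w i ∧ w i ≤ z i then (1 : ℚ) else 0) := by
        rw [Fintype.piFinset_univ]
    _ = ∑ w : ∀ i : Fin k, Fin (n i + 1), (if x ≤ w ∧ w ≤ z then (1 : ℚ) else 0) :=
        Finset.sum_congr rfl fun w _ => (h1 w).symm

private lemma card_supIrred :
    Nat.card {a : TransferSystem (∀ i : Fin k, Fin (n i + 1)) // SupIrred a}
      = Fintype.card {e : (∀ i : Fin k, Fin (n i + 1)) × (∀ i : Fin k, Fin (n i + 1)) //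
          e.1 < e.2} := by
  classical
  rw [← Nat.card_eq_fintype_card]
  refine Nat.card_congr (Equiv.symm (Equiv.ofBijective
    (fun e => ⟨genTS e.1.1 e.1.2, supIrred_genTS e.2⟩) ⟨?_, ?_⟩))
  · rintro ⟨⟨p, q⟩, hpq⟩ ⟨⟨p', q'⟩, hpq'⟩ he
    have h2 := genTS_inj hpq hpq' (congrArg Subtype.val he)
    exact Subtype.ext (Prod.ext h2.1 h2.2)
  · rintro ⟨T, hT⟩
    obtain ⟨p, q, hpq, rfl⟩ := supIrred_iff.1 hT
    exact ⟨⟨(p, q), hpq⟩, rfl⟩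

private lemma card_infIrred :
    Nat.card {a : TransferSystem (∀ i : Fin k, Fin (n i + 1)) // InfIrred a}
      = Fintype.card {e : (∀ i : Fin k, Fin (n i + 1)) × (∀ i : Fin k, Fin (n i + 1)) //
          e.1 < e.2} := by
  classical
  rw [← Nat.card_eq_fintype_card]
  refine Nat.card_congr (Equiv.symm (Equiv.ofBijective
    (fun e => ⟨coTS e.1.1 e.1.2, infIrred_coTS e.2⟩) ⟨?_, ?_⟩))
  · rintro ⟨⟨p, q⟩, hpq⟩ ⟨⟨p', q'⟩, hpq'⟩ he
    have h2 := coTS_inj hpq hpq' (congrArg Subtype.val he)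
    exact Subtype.ext (Prod.ext h2.1 h2.2)
  · rintro ⟨T, hT⟩
    obtain ⟨p, q, hpq, rfl⟩ := infIrred_iff.1 hT
    exact ⟨⟨(p, q), hpq⟩, rfl⟩

private lemma cond_iff {α : Type*} [Lattice α] {x y z w : α} :
    (x ≤ y ∧ y ≤ z ∧ x ≤ w ∧ w ≤ z ∧ ¬ y ≤ w)
      ↔ (w < z ∧ x < y ∧ x ≤ w ∧ y ≤ z ∧ ¬ y ≤ w) := by
  constructor
  · rintro ⟨h1, h2, h3, h4, h5⟩
    refine ⟨lt_of_le_of_ne h4 fun e => h5 (by rw [e]; exact h2), ?_, h3, h2, h5⟩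
    exact lt_of_le_of_ne h1 fun e => h5 (by rw [← e]; exact h3)
  · rintro ⟨h1, h2, h3, h4, h5⟩
    exact ⟨h2.le, h4, h3, h1.le, h5⟩

private lemma card_pairs :
    Nat.card {p : TransferSystem (∀ i : Fin k, Fin (n i + 1)) ×
        TransferSystem (∀ i : Fin k, Fin (n i + 1)) //
        SupIrred p.1 ∧ InfIrred p.2 ∧ ¬ p.1 ≤ p.2}
      = Fintype.card {t : ((∀ i : Fin k, Fin (n i + 1)) × (∀ i : Fin k, Fin (n i + 1))) ×
          ((∀ i : Fin k, Fin (n i + 1)) × (∀ i : Fin k, Fin (n i + 1))) //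
          t.1.1 ≤ t.1.2 ∧ t.1.2 ≤ t.2.1 ∧ t.1.1 ≤ t.2.2 ∧ t.2.2 ≤ t.2.1 ∧ ¬ t.1.2 ≤ t.2.2} := by
  classical
  rw [← Nat.card_eq_fintype_card]
  refine Nat.card_congr (Equiv.symm (Equiv.ofBijective
    (fun t => ⟨(genTS t.1.2.2 t.1.2.1, coTS t.1.1.1 t.1.1.2),
      supIrred_genTS (cond_iff.1 t.2).1, infIrred_coTS (cond_iff.1 t.2).2.1,
      (not_genTS_le_coTS_iff (cond_iff.1 t.2).1).2
        ⟨(cond_iff.1 t.2).2.2.1, (cond_iff.1 t.2).2.2.2.1, (cond_iff.1 t.2).2.2.2.2⟩⟩)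
    ⟨?_, ?_⟩))
  · rintro ⟨⟨⟨x, y⟩, ⟨z, w⟩⟩, hc⟩ ⟨⟨⟨x', y'⟩, ⟨z', w'⟩⟩, hc'⟩ he
    obtain ⟨hwz, hxy, -, -, -⟩ := cond_iff.1 hc
    obtain ⟨hwz', hxy', -, -, -⟩ := cond_iff.1 hc'
    have he2 : (genTS w z, coTS x y) = (genTS w' z', coTS x' y') := congrArg Subtype.val he
    have hg := genTS_inj hwz hwz' (congrArg Prod.fst he2)
    have hco := coTS_inj hxy hxy' (congrArg Prod.snd he2)
    exact Subtype.ext (Prod.ext (Prod.ext hco.1 hco.2) (Prod.ext hg.2 hg.1))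
  · rintro ⟨⟨A, B⟩, hA, hB, hAB⟩
    obtain ⟨p, q, hpq, rfl⟩ := supIrred_iff.1 hA
    obtain ⟨x, y, hxy, rfl⟩ := infIrred_iff.1 hB
    obtain ⟨hxp, hyq, hyp⟩ := (not_genTS_le_coTS_iff hpq).1 hAB
    exact ⟨⟨((x, y), (q, p)), ⟨hxy.le, hyq, hxp, hpq.le, hyp⟩⟩, rfl⟩

private lemma denom_eq :
    (∑ x : ∀ i : Fin k, Fin (n i + 1), ((∏ i, ((n i : ℚ) - ((x i : ℕ) : ℚ) + 1)) - 1))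
      = ((Fintype.card {e : (∀ i : Fin k, Fin (n i + 1)) × (∀ i : Fin k, Fin (n i + 1)) //
          e.1 < e.2} : ℕ) : ℚ) := by
  classical
  have step1 : ∀ x : ∀ i : Fin k, Fin (n i + 1),
      (∏ i, ((n i : ℚ) - ((x i : ℕ) : ℚ) + 1))
        = ∑ w : ∀ i : Fin k, Fin (n i + 1), (if x ≤ w then (1 : ℚ) else 0) := by
    intro x
    have hle : x ≤ fun i => Fin.last (n i) := fun i => Fin.le_last _
    have h0 : (∏ i, ((n i : ℚ) - ((x i : ℕ) : ℚ) + 1))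
        = ∏ i, ((((fun i => Fin.last (n i)) i : ℕ) : ℚ) - ((x i : ℕ) : ℚ) + 1) := by
      refine Finset.prod_congr rfl fun i _ => ?_
      rw [show (((fun i => Fin.last (n i)) i : Fin (n i + 1)) : ℕ) = n i from Fin.val_last _]
    rw [h0, prod_eq_sum_indicator hle]
    refine Finset.sum_congr rfl fun w _ => ?_
    refine if_congr ?_ rfl rfl
    simp only [and_iff_left_iff_imp]
    intro
    exact fun i => Fin.le_last _
  calc (∑ x : ∀ i : Fin k, Fin (n i + 1), ((∏ i, ((n i : ℚ) - ((x i : ℕ) : ℚ) + 1)) - 1))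
      = ∑ x : ∀ i : Fin k, Fin (n i + 1), ∑ w : ∀ i : Fin k, Fin (n i + 1),
          (if x < w then (1 : ℚ) else 0) := by
        refine Finset.sum_congr rfl fun x _ => ?_
        rw [step1 x]
        have hone : (1 : ℚ) = ∑ w : ∀ i : Fin k, Fin (n i + 1),
            (if x = w then (1 : ℚ) else 0) := by
          rw [Finset.sum_ite_eq]; simp
        rw [hone, ← Finset.sum_sub_distrib]
        refine Finset.sum_congr rfl fun w _ => ?_
        by_cases h1 : x ≤ w
        · by_cases h2 : x = w
          · simp [h1, h2, lt_irrefl]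
          · simp [h1, h2, lt_of_le_of_ne h1 h2]
        · have h3 : x ≠ w := fun e => h1 e.le
          have h4 : ¬ x < w := fun e => h1 e.le
          simp [h1, h3, h4]
    _ = ((Fintype.card {e : (∀ i : Fin k, Fin (n i + 1)) × (∀ i : Fin k, Fin (n i + 1)) //
          e.1 < e.2} : ℕ) : ℚ) := by
        rw [Fintype.card_subtype, Finset.card_filter, Nat.cast_sum]
        simp only [Fintype.sum_prod_type]
        refine Finset.sum_congr rfl fun x _ => Finset.sum_congr rfl fun w _ => ?_
        by_cases h : x < w <;> simp [h]

private lemma numer_eq :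
    (∑ x : ∀ i : Fin k, Fin (n i + 1), ∑ y : ∀ i : Fin k, Fin (n i + 1),
        ∑ z : ∀ i : Fin k, Fin (n i + 1),
          if ∀ i, x i ≤ y i ∧ y i ≤ z i then
            (∏ i, (((z i : ℕ) : ℚ) - ((x i : ℕ) : ℚ) + 1)) -
              ∏ i, (((z i : ℕ) : ℚ) - ((y i : ℕ) : ℚ) + 1)
          else 0)
      = ((Fintype.card {t : ((∀ i : Fin k, Fin (n i + 1)) × (∀ i : Fin k, Fin (n i + 1))) ×
          ((∀ i : Fin k, Fin (n i + 1)) × (∀ i : Fin k, Fin (n i + 1))) //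
          t.1.1 ≤ t.1.2 ∧ t.1.2 ≤ t.2.1 ∧ t.1.1 ≤ t.2.2 ∧ t.2.2 ≤ t.2.1 ∧ ¬ t.1.2 ≤ t.2.2}
          : ℕ) : ℚ) := by
  classical
  have hcond : ∀ x y z : ∀ i : Fin k, Fin (n i + 1),
      (∀ i, x i ≤ y i ∧ y i ≤ z i) ↔ (x ≤ y ∧ y ≤ z) := by
    intro x y z
    rw [forall_and]
    exact and_congr (Pi.le_def).symm (Pi.le_def).symm
  calc (∑ x : ∀ i : Fin k, Fin (n i + 1), ∑ y : ∀ i : Fin k, Fin (n i + 1),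
        ∑ z : ∀ i : Fin k, Fin (n i + 1),
          if ∀ i, x i ≤ y i ∧ y i ≤ z i then
            (∏ i, (((z i : ℕ) : ℚ) - ((x i : ℕ) : ℚ) + 1)) -
              ∏ i, (((z i : ℕ) : ℚ) - ((y i : ℕ) : ℚ) + 1)
          else 0)
      = ∑ x : ∀ i : Fin k, Fin (n i + 1), ∑ y : ∀ i : Fin k, Fin (n i + 1),
          ∑ z : ∀ i : Fin k, Fin (n i + 1), ∑ w : ∀ i : Fin k, Fin (n i + 1),
            (if x ≤ y ∧ y ≤ z ∧ x ≤ w ∧ w ≤ z ∧ ¬ y ≤ w then (1 : ℚ) else 0) := by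
        refine Finset.sum_congr rfl fun x _ => Finset.sum_congr rfl fun y _ =>
          Finset.sum_congr rfl fun z _ => ?_
        by_cases hxyz : x ≤ y ∧ y ≤ z
        · rw [if_pos ((hcond x y z).2 hxyz)]
          obtain ⟨hxy, hyz⟩ := hxyz
          have hxz : x ≤ z := hxy.trans hyz
          rw [prod_eq_sum_indicator hxz, prod_eq_sum_indicator hyz, ← Finset.sum_sub_distrib]
          refine Finset.sum_congr rfl fun w _ => ?_
          by_cases h3 : y ≤ w
          · have h1' : x ≤ w := hxy.trans h3
            simp [h1', h3, sub_self]
          · simp [h3, hxy, hyz]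
        · rw [if_neg (fun hc => hxyz ((hcond x y z).1 hc))]
          refine (Finset.sum_eq_zero fun w _ => ?_).symm
          rw [if_neg]
          tauto
    _ = ((Fintype.card {t : ((∀ i : Fin k, Fin (n i + 1)) × (∀ i : Fin k, Fin (n i + 1))) ×
          ((∀ i : Fin k, Fin (n i + 1)) × (∀ i : Fin k, Fin (n i + 1))) //
          t.1.1 ≤ t.1.2 ∧ t.1.2 ≤ t.2.1 ∧ t.1.1 ≤ t.2.2 ∧ t.2.2 ≤ t.2.1 ∧ ¬ t.1.2 ≤ t.2.2}
          : ℕ) : ℚ) := by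
        rw [Fintype.card_subtype, Finset.card_filter, Nat.cast_sum]
        simp only [Fintype.sum_prod_type]
        refine Finset.sum_congr rfl fun x _ => Finset.sum_congr rfl fun y _ =>
          Finset.sum_congr rfl fun z _ => Finset.sum_congr rfl fun w _ => ?_
        by_cases h : x ≤ y ∧ y ≤ z ∧ x ≤ w ∧ w ≤ z ∧ ¬ y ≤ w <;> simp [h]

end Counting

/-- The codensity of `Tr([n₁] × ⋯ × [n_k])` equals `N / D²`, where `N`
sums `∏(zᵢ - xᵢ + 1) - ∏(zᵢ - yᵢ + 1)` over all tuples with `xᵢ ≤ yᵢ ≤ zᵢ ≤ nᵢ`, and `D`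
sums `∏(nᵢ - xᵢ + 1) - 1` over all tuples with `xᵢ ≤ nᵢ`. -/
theorem codensity_pi_chain (k : ℕ) (hk : 1 ≤ k) (n : Fin k → ℕ) (hn : ∀ i, 1 ≤ n i) :
    codensity (TransferSystem (∀ i : Fin k, Fin (n i + 1))) =
      (∑ x : ∀ i : Fin k, Fin (n i + 1), ∑ y : ∀ i : Fin k, Fin (n i + 1),
          ∑ z : ∀ i : Fin k, Fin (n i + 1),
            if ∀ i, x i ≤ y i ∧ y i ≤ z i then
              (∏ i, (((z i : ℕ) : ℚ) - ((x i : ℕ) : ℚ) + 1)) -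
                ∏ i, (((z i : ℕ) : ℚ) - ((y i : ℕ) : ℚ) + 1)
            else 0) /
        (∑ x : ∀ i : Fin k, Fin (n i + 1),
          ((∏ i, ((n i : ℚ) - ((x i : ℕ) : ℚ) + 1)) - 1)) ^ 2 := by
  classical
  unfold codensity
  rw [card_pairs, card_supIrred, card_infIrred, ← numer_eq, ← denom_eq, sq]
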